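/- arXiv:math/0403115 — 2 statements merged into one kernel-verified Lean document; each statement's English description precedes it below -/
import Mathlib

section
/- The map x ↦ ‖x‖ := max_{i=1,...,m} (i! |xⁱ|)^{1/i} on T̃⁽ᵐ⁾(V) is a subadditive homogeneous norm: ‖x‖ = 0 iff x = 1; ‖δ_t x‖ = |t| ‖x‖ for all t ∈ ℝ; and ‖x ⊗ y‖ ≤ ‖x‖ + ‖y‖ for all x, y ∈ T̃⁽ᵐ⁾(V). -/
open scoped BigOperators NNReal

set_option synthInstance.maxHeartbeats 1000000
set_option maxHeartbeats 1000000

/-- The `i`-th graded component of `x`, in the ambient algebra `A` which models the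
truncated tensor algebra `T⁽ᵐ⁾(V)`. -/
noncomputable def gcomp {A : Type*} [NormedRing A] [NormedAlgebra ℝ A]
    (𝒜 : ℕ → Submodule ℝ A) [GradedAlgebra 𝒜] (x : A) (i : ℕ) : A :=
  (DirectSum.decompose 𝒜 x i : A)

section Aux
variable {A : Type*} [NormedRing A] [NormedAlgebra ℝ A]
    (𝒜 : ℕ → Submodule ℝ A) [GradedAlgebra 𝒜] {m : ℕ}

lemma gcomp_mem (x : A) (i : ℕ) : gcomp 𝒜 x i ∈ 𝒜 i := (DirectSum.decompose 𝒜 x i).2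

lemma gcomp_of_mem {a : A} {j : ℕ} (h : a ∈ 𝒜 j) (i : ℕ) :
    gcomp 𝒜 a i = if i = j then a else 0 := by
  by_cases hij : i = j
  · subst hij; simp [gcomp, DirectSum.decompose_of_mem_same 𝒜 h]
  · simp [gcomp, DirectSum.decompose_of_mem_ne 𝒜 h (Ne.symm hij), hij]

lemma gcomp_one (i : ℕ) : gcomp 𝒜 1 i = if i = 0 then 1 else 0 :=
  gcomp_of_mem 𝒜 (SetLike.one_mem_graded 𝒜) i

lemma gcomp_eq_zero (htrunc : ∀ i, m < i → 𝒜 i = ⊥) (x : A) {i : ℕ} (hi : m < i) :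
    gcomp 𝒜 x i = 0 := by
  have h := gcomp_mem 𝒜 x i
  rw [htrunc i hi] at h
  simpa using h

lemma gcomp_add (x y : A) (i : ℕ) : gcomp 𝒜 (x+y) i = gcomp 𝒜 x i + gcomp 𝒜 y i := by
  have h : DirectSum.decompose 𝒜 (x+y) = DirectSum.decompose 𝒜 x + DirectSum.decompose 𝒜 y :=
    map_add (DirectSum.decomposeAddEquiv 𝒜) x y
  rw [gcomp, h, DirectSum.add_apply]
  rfl

lemma gcomp_zero (i : ℕ) : gcomp 𝒜 (0:A) i = 0 := by
  have h : DirectSum.decompose 𝒜 (0:A) = 0 := map_zero (DirectSum.decomposeAddEquiv 𝒜)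
  rw [gcomp, h]; rfl

noncomputable def gcompHom (i : ℕ) : A →+ A where
  toFun x := gcomp 𝒜 x i
  map_zero' := gcomp_zero 𝒜 i
  map_add' x y := gcomp_add 𝒜 x y i

lemma gcomp_sum {ι : Type*} (s : Finset ι) (f : ι → A) (i : ℕ) :
    gcomp 𝒜 (∑ j ∈ s, f j) i = ∑ j ∈ s, gcomp 𝒜 (f j) i :=
  map_sum (gcompHom 𝒜 i) f s

lemma gcomp_smul (t : ℝ) (x : A) (i : ℕ) : gcomp 𝒜 (t • x) i = t • gcomp 𝒜 x i := by
  have h : DirectSum.decompose 𝒜 (t • x) = t • DirectSum.decompose 𝒜 x :=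
    map_smul (DirectSum.decomposeLinearEquiv 𝒜) t x
  rw [gcomp, h]
  rfl

lemma sum_gcomp (htrunc : ∀ i, m < i → 𝒜 i = ⊥) (x : A) :
    ∑ i ∈ Finset.range (m + 1), gcomp 𝒜 x i = x := by
  classical
  simp only [gcomp]
  conv_rhs => rw [← DirectSum.sum_support_decompose 𝒜 x]
  refine (Finset.sum_subset ?_ ?_).symm
  · intro i hi
    rw [Finset.mem_range]
    by_contra h
    push_neg at h
    have hz : gcomp 𝒜 x i = 0 := gcomp_eq_zero 𝒜 htrunc x (Nat.lt_of_succ_le h)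
    rw [DFinsupp.mem_support_iff] at hi
    exact hi (Subtype.ext hz)
  · intro i _ hi
    rw [DFinsupp.notMem_support_iff] at hi
    simp [gcomp, hi]

lemma gcomp_mul (htrunc : ∀ i, m < i → 𝒜 i = ⊥) (x y : A) {i : ℕ} (hi : i ≤ m) :
    gcomp 𝒜 (x * y) i =
      ∑ p ∈ Finset.HasAntidiagonal.antidiagonal i, gcomp 𝒜 x p.1 * gcomp 𝒜 y p.2 := by
  conv_lhs => rw [← sum_gcomp 𝒜 htrunc x, ← sum_gcomp 𝒜 htrunc y]
  rw [Finset.sum_mul_sum, gcomp_sum]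
  simp only [gcomp_sum]
  have hterm : ∀ j k : ℕ, gcomp 𝒜 (gcomp 𝒜 x j * gcomp 𝒜 y k) i =
      if i = j + k then gcomp 𝒜 x j * gcomp 𝒜 y k else 0 := fun j k =>
    gcomp_of_mem 𝒜 (SetLike.mul_mem_graded (gcomp_mem 𝒜 x j) (gcomp_mem 𝒜 y k)) i
  simp only [hterm]
  rw [← Finset.sum_product']
  rw [Finset.sum_ite, Finset.sum_const_zero, add_zero]
  apply Finset.sum_congr _ (fun _ _ => rfl)
  ext p
  simp only [Finset.mem_filter, Finset.mem_product, Finset.mem_range,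
    Finset.HasAntidiagonal.mem_antidiagonal]
  constructor
  · rintro ⟨-, h⟩; omega
  · intro h; omega

noncomputable def hnormNN {A : Type*} [NormedRing A] [NormedAlgebra ℝ A]
    (𝒜 : ℕ → Submodule ℝ A) [GradedAlgebra 𝒜] (m : ℕ) (x : A) : ℝ≥0 :=
  (Finset.Icc 1 m).sup fun i =>
    ((i.factorial : ℝ≥0) * ‖gcomp 𝒜 x i‖₊) ^ ((i : ℝ)⁻¹)

lemma key_bound (x : A) {j : ℕ} (hj1 : 1 ≤ j) (hjm : j ≤ m) :
    (j.factorial : ℝ≥0) * ‖gcomp 𝒜 x j‖₊ ≤ (hnormNN 𝒜 m x) ^ j := by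
  set c : ℝ≥0 := (j.factorial : ℝ≥0) * ‖gcomp 𝒜 x j‖₊ with hc
  have h : c ^ ((j : ℝ)⁻¹) ≤ hnormNN 𝒜 m x :=
    Finset.le_sup (f := fun i => ((i.factorial : ℝ≥0) * ‖gcomp 𝒜 x i‖₊) ^ ((i : ℝ)⁻¹))
      (Finset.mem_Icc.mpr ⟨hj1, hjm⟩)
  have hj0 : (j : ℝ) ≠ 0 := Nat.cast_ne_zero.mpr (by omega)
  calc c = (c ^ ((j : ℝ)⁻¹)) ^ (j : ℕ) := by
        rw [← NNReal.rpow_natCast (c ^ ((j:ℝ)⁻¹)) j, ← NNReal.rpow_mul,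
          inv_mul_cancel₀ hj0, NNReal.rpow_one]
    _ ≤ (hnormNN 𝒜 m x) ^ (j : ℕ) := pow_le_pow_left₀ zero_le h j

lemma pow_rpow_inv {i : ℕ} (hi : 1 ≤ i) (c : ℝ≥0) : (c ^ (i:ℕ)) ^ ((i : ℝ)⁻¹) = c := by
  have hi0 : (i : ℝ) ≠ 0 := Nat.cast_ne_zero.mpr (by omega)
  rw [← NNReal.rpow_natCast c i, ← NNReal.rpow_mul, mul_inv_cancel₀ hi0, NNReal.rpow_one]

lemma gcomp_dil (m : ℕ) (t : ℝ) (x : A) {i : ℕ} (hi : i ≤ m) :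
    gcomp 𝒜 (∑ j ∈ Finset.range (m + 1), t ^ j • gcomp 𝒜 x j) i
      = t ^ i • gcomp 𝒜 x i := by
  rw [gcomp_sum]
  have hterm : ∀ j : ℕ, gcomp 𝒜 (t ^ j • gcomp 𝒜 x j) i =
      if i = j then t ^ j • gcomp 𝒜 x j else 0 := by
    intro j
    rw [gcomp_smul, gcomp_of_mem 𝒜 (gcomp_mem 𝒜 x j) i]
    split <;> simp
  simp only [hterm]
  rw [Finset.sum_ite_eq]
  simp [Nat.lt_succ_of_le hi]

lemma hnormNN_dil (m : ℕ) (t : ℝ) (x : A) :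
    hnormNN 𝒜 m (∑ j ∈ Finset.range (m + 1), t ^ j • gcomp 𝒜 x j)
      = ‖t‖₊ * hnormNN 𝒜 m x := by
  rw [hnormNN, hnormNN, NNReal.mul_finset_sup]
  apply Finset.sup_congr rfl
  intro i hi
  rw [Finset.mem_Icc] at hi
  rw [gcomp_dil 𝒜 m t x hi.2, nnnorm_smul, nnnorm_pow, mul_left_comm,
    NNReal.mul_rpow, pow_rpow_inv hi.1]

lemma part1 (m : ℕ) (htrunc : ∀ i, m < i → 𝒜 i = ⊥) (x : A) (hx : gcomp 𝒜 x 0 = 1) :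
    hnormNN 𝒜 m x = 0 ↔ x = 1 := by
  constructor
  · intro h
    have hz : ∀ i ∈ Finset.Icc 1 m, gcomp 𝒜 x i = 0 := by
      intro i hi
      rw [Finset.mem_Icc] at hi
      have hle : (((i.factorial : ℝ≥0) * ‖gcomp 𝒜 x i‖₊) ^ ((i : ℝ)⁻¹)) = 0 := by
        refine le_antisymm ?_ zero_le
        rw [← h, hnormNN]
        exact Finset.le_sup (f := fun i => ((i.factorial : ℝ≥0) * ‖gcomp 𝒜 x i‖₊) ^ ((i : ℝ)⁻¹))
          (Finset.mem_Icc.mpr hi)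
      rw [NNReal.rpow_eq_zero_iff] at hle
      have hbase := hle.1
      rcases mul_eq_zero.mp hbase with hf | hn
      · exact absurd hf (by exact_mod_cast i.factorial_ne_zero)
      · exact nnnorm_eq_zero.mp hn
    rw [← sum_gcomp 𝒜 htrunc x, Finset.sum_range_succ']
    rw [Finset.sum_eq_zero, zero_add, hx]
    intro i hi
    rw [Finset.mem_range] at hi
    exact hz (i + 1) (Finset.mem_Icc.mpr ⟨by omega, by omega⟩)
  · rintro rfl
    refine le_antisymm (Finset.sup_le ?_) zero_le
    intro i hi
    rw [Finset.mem_Icc] at hi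
    have : gcomp 𝒜 (1 : A) i = 0 := by
      rw [gcomp_one]
      simp [Nat.one_le_iff_ne_zero.mp hi.1]
    rw [this]
    simp only [nnnorm_zero, mul_zero]
    rw [NNReal.zero_rpow (by
      simp only [ne_eq, inv_eq_zero, Nat.cast_eq_zero]
      omega)]

lemma part3 (m : ℕ) (htrunc : ∀ i, m < i → 𝒜 i = ⊥) (x y : A)
    (hx : gcomp 𝒜 x 0 = 1) (hy : gcomp 𝒜 y 0 = 1) :
    hnormNN 𝒜 m (x * y) ≤ hnormNN 𝒜 m x + hnormNN 𝒜 m y := by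
  set a := hnormNN 𝒜 m x with ha
  set b := hnormNN 𝒜 m y with hb
  apply Finset.sup_le
  intro i hi
  rw [Finset.mem_Icc] at hi
  have key : (i.factorial : ℝ≥0) * ‖gcomp 𝒜 (x * y) i‖₊ ≤ (a + b) ^ i := by
    rw [gcomp_mul 𝒜 htrunc x y hi.2]
    calc (i.factorial : ℝ≥0) * ‖∑ p ∈ Finset.HasAntidiagonal.antidiagonal i,
            gcomp 𝒜 x p.1 * gcomp 𝒜 y p.2‖₊
        ≤ (i.factorial : ℝ≥0) * ∑ p ∈ Finset.HasAntidiagonal.antidiagonal i,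
            ‖gcomp 𝒜 x p.1 * gcomp 𝒜 y p.2‖₊ := by
          gcongr
          exact nnnorm_sum_le _ _
      _ = ∑ p ∈ Finset.HasAntidiagonal.antidiagonal i,
            (i.factorial : ℝ≥0) * ‖gcomp 𝒜 x p.1 * gcomp 𝒜 y p.2‖₊ :=
          Finset.mul_sum _ _ _
      _ ≤ ∑ p ∈ Finset.HasAntidiagonal.antidiagonal i, a ^ p.1 * b ^ p.2 * (i.choose p.1 : ℝ≥0) := by
          refine Finset.sum_le_sum ?_
          rintro ⟨j, k⟩ hp
          rw [Finset.HasAntidiagonal.mem_antidiagonal] at hp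
          simp only
          rcases Nat.eq_zero_or_pos j with hj | hj
          · subst hj
            have hk : k = i := by omega
            subst hk
            rw [hx, one_mul]
            simpa using key_bound 𝒜 y hi.1 hi.2
          · rcases Nat.eq_zero_or_pos k with hk | hk
            · subst hk
              have hj' : j = i := by omega
              subst hj'
              rw [hy, mul_one]
              simpa using key_bound 𝒜 x hi.1 hi.2
            · have hfact : (i.factorial : ℝ≥0)
                  = (i.choose j : ℝ≥0) * (j.factorial : ℝ≥0) * (k.factorial : ℝ≥0) := by
                have := Nat.choose_mul_factorial_mul_factorial (le_of_add_le_left hp.le)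
                rw [show i - j = k by omega] at this
                exact_mod_cast this.symm
              calc (i.factorial : ℝ≥0) * ‖gcomp 𝒜 x j * gcomp 𝒜 y k‖₊
                  ≤ (i.factorial : ℝ≥0) * (‖gcomp 𝒜 x j‖₊ * ‖gcomp 𝒜 y k‖₊) := by
                    gcongr
                    exact nnnorm_mul_le _ _
                _ = (i.choose j : ℝ≥0) * (((j.factorial : ℝ≥0) * ‖gcomp 𝒜 x j‖₊)
                      * ((k.factorial : ℝ≥0) * ‖gcomp 𝒜 y k‖₊)) := by
                    rw [hfact]; ring
                _ ≤ (i.choose j : ℝ≥0) * (a ^ j * b ^ k) := by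
                    gcongr
                    · exact key_bound 𝒜 x hj (by omega)
                    · exact key_bound 𝒜 y hk (by omega)
                _ = a ^ j * b ^ k * (i.choose j : ℝ≥0) := by ring
      _ = ∑ k ∈ Finset.range (i + 1), a ^ k * b ^ (i - k) * (i.choose k : ℝ≥0) :=
          Finset.Nat.sum_antidiagonal_eq_sum_range_succ_mk _ _
      _ = (a + b) ^ i := (add_pow a b i).symm
  calc ((i.factorial : ℝ≥0) * ‖gcomp 𝒜 (x * y) i‖₊) ^ ((i : ℝ)⁻¹)
      ≤ ((a + b) ^ i) ^ ((i : ℝ)⁻¹) := NNReal.rpow_le_rpow key (by positivity)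
    _ = a + b := pow_rpow_inv hi.1 _

end Aux


/-- The homogeneous norm `‖x‖ = max_{i=1..m} (i!|xⁱ|)^{1/i}`. -/
noncomputable def hnorm {A : Type*} [NormedRing A] [NormedAlgebra ℝ A]
    (𝒜 : ℕ → Submodule ℝ A) [GradedAlgebra 𝒜] (m : ℕ) (x : A) : ℝ :=
  (((Finset.Icc 1 m).sup fun i =>
    ((i.factorial : ℝ≥0) * ‖gcomp 𝒜 x i‖₊) ^ ((i : ℝ)⁻¹) : ℝ≥0) : ℝ)

/-- The dilation `δ_t x = 1 + t x¹ + ⋯ + tᵐ xᵐ`. -/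
noncomputable def dil {A : Type*} [NormedRing A] [NormedAlgebra ℝ A]
    (𝒜 : ℕ → Submodule ℝ A) [GradedAlgebra 𝒜] (m : ℕ) (t : ℝ) (x : A) : A :=
  ∑ i ∈ Finset.range (m + 1), t ^ i • gcomp 𝒜 x i

/-- `x ↦ max_{i=1..m}(i!|xⁱ|)^{1/i}` is a subadditive homogeneous norm on `T̃⁽ᵐ⁾(V)`:
it vanishes exactly at `1`, is homogeneous for dilations, and is subadditive. -/
theorem hnorm_is_subadditive_homogeneous_norm {A : Type*} [NormedRing A] [NormedAlgebra ℝ A]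
    (𝒜 : ℕ → Submodule ℝ A) [GradedAlgebra 𝒜] (m : ℕ) (hm : 1 ≤ m)
    (htrunc : ∀ i, m < i → 𝒜 i = ⊥) :
    (∀ x : A, gcomp 𝒜 x 0 = 1 → (hnorm 𝒜 m x = 0 ↔ x = 1)) ∧
    (∀ (t : ℝ) (x : A), gcomp 𝒜 x 0 = 1 →
      hnorm 𝒜 m (dil 𝒜 m t x) = |t| * hnorm 𝒜 m x) ∧
    (∀ x y : A, gcomp 𝒜 x 0 = 1 → gcomp 𝒜 y 0 = 1 →
      hnorm 𝒜 m (x * y) ≤ hnorm 𝒜 m x + hnorm 𝒜 m y) := by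
  have hcoe : ∀ x : A, hnorm 𝒜 m x = (hnormNN 𝒜 m x : ℝ) := fun x => rfl
  refine ⟨?_, ?_, ?_⟩
  · intro x hx
    rw [hcoe, NNReal.coe_eq_zero]
    exact part1 𝒜 m htrunc x hx
  · intro t x _
    rw [hcoe, hcoe]
    rw [show dil 𝒜 m t x = ∑ j ∈ Finset.range (m + 1), t ^ j • gcomp 𝒜 x j from rfl]
    rw [hnormNN_dil 𝒜 m t x, NNReal.coe_mul, coe_nnnorm, Real.norm_eq_abs]
  · intro x y hx hy
    rw [hcoe, hcoe, hcoe, ← NNReal.coe_add, NNReal.coe_le_coe]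
    exact part3 𝒜 m htrunc x y hx hy
end

section
/- The space C^{p-var}(G^m(V)) of continuous G^m(V)-valued paths starting at the identity with finite p-variation is complete with respect to the p-variation distance d_{p-var}. -/
open scoped BigOperators

/-- `τ : Fin (n+1) → ℝ` is a partition of `[a,b]`. -/
def IsPartition {n : ℕ} (τ : Fin (n + 1) → ℝ) (a b : ℝ) : Prop :=
  Monotone τ ∧ τ 0 = a ∧ τ (Fin.last n) = b

/-- Increment `X_{s,t} = X_s⁻¹ * X_t`. -/
def inc {G : Type*} [Group G] (X : ℝ → G) (s t : ℝ) : G := (X s)⁻¹ * X t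

/-- Membership in `C^{p-var}(G^m(V))`: a continuous path on `[0,1]` starting at the
identity with finite `p`-variation. -/
def InPvarSpace {G : Type*} [Group G] [MetricSpace G] (p : ℝ) (X : ℝ → G) : Prop :=
  ContinuousOn X (Set.Icc (0:ℝ) 1) ∧ X 0 = 1 ∧
    ∃ M : ℝ, ∀ (n : ℕ) (τ : Fin (n + 1) → ℝ), IsPartition τ 0 1 →
      ∑ i : Fin n, dist (1 : G) (inc X (τ i.castSucc) (τ i.succ)) ^ p ≤ M

/-- The space `C^{p-var}(G^m(V))` is complete for the `p`-variation distance
`d_{p-var}`: every Cauchy sequence (Cauchy in the sense that the `p`-variation sums of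
the differences are eventually uniformly small over all partitions) converges in
`d_{p-var}` to an element of the space. Here `G` is a complete metric topological
group with left-invariant metric, as is the free nilpotent group `G^m(V)` with the
distance of a homogeneous norm. -/
theorem pvar_space_complete {G : Type*} [Group G] [MetricSpace G]
    [CompleteSpace G] [IsTopologicalGroup G]
    (hleft : ∀ a x y : G, dist (a * x) (a * y) = dist x y)
    (p : ℝ) (hp : 1 ≤ p)
    (X : ℕ → ℝ → G) (hX : ∀ k, InPvarSpace p (X k))
    (hcauchy : ∀ ε > (0:ℝ), ∃ N : ℕ, ∀ k l, N ≤ k → N ≤ l →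
      ∀ (n : ℕ) (τ : Fin (n + 1) → ℝ), IsPartition τ 0 1 →
        (∑ i : Fin n, dist (inc (X k) (τ i.castSucc) (τ i.succ))
            (inc (X l) (τ i.castSucc) (τ i.succ)) ^ p) ^ (1 / p) ≤ ε) :
    ∃ Xlim : ℝ → G, InPvarSpace p Xlim ∧
      ∀ ε > (0:ℝ), ∃ N : ℕ, ∀ k, N ≤ k →
        ∀ (n : ℕ) (τ : Fin (n + 1) → ℝ), IsPartition τ 0 1 →
          (∑ i : Fin n, dist (inc (X k) (τ i.castSucc) (τ i.succ))
              (inc Xlim (τ i.castSucc) (τ i.succ)) ^ p) ^ (1 / p) ≤ ε := by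
  classical
  have hp0 : (0:ℝ) < p := lt_of_lt_of_le one_pos hp
  have hpne : p ≠ 0 := ne_of_gt hp0
  have hmem : ∀ {n : ℕ} (τ : Fin (n+1) → ℝ), IsPartition τ 0 1 → ∀ i, τ i ∈ Set.Icc (0:ℝ) 1 := by
    rintro n τ ⟨hm, h0, h1⟩ i
    exact ⟨h0 ▸ hm (Fin.zero_le i), h1 ▸ hm (Fin.le_last i)⟩
  -- uniform Cauchy
  have hUC : ∀ ε : ℝ, 0 < ε → ∃ N, ∀ k l, N ≤ k → N ≤ l →
      ∀ t ∈ Set.Icc (0:ℝ) 1, dist (X k t) (X l t) ≤ ε := by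
    intro ε hε
    obtain ⟨N, hN⟩ := hcauchy ε hε
    refine ⟨N, fun k l hk hl t ht => ?_⟩
    set τ : Fin 3 → ℝ := ![0, t, 1] with hτdef
    have hτ : IsPartition τ 0 1 := by
      refine ⟨Fin.monotone_iff_le_succ.2 ?_, by simp [τ], by simp [τ, Fin.last]⟩
      intro i
      fin_cases i <;> simp [τ]
      exacts [ht.1, ht.2]
    have h := hN k l hk hl 2 τ hτ
    have hterm : dist (inc (X k) 0 t) (inc (X l) 0 t) ^ p ≤
        ∑ i : Fin 2, dist (inc (X k) (τ i.castSucc) (τ i.succ))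
          (inc (X l) (τ i.castSucc) (τ i.succ)) ^ p := by
      have h0 := Finset.single_le_sum
        (f := fun i : Fin 2 => dist (inc (X k) (τ i.castSucc) (τ i.succ))
          (inc (X l) (τ i.castSucc) (τ i.succ)) ^ p)
        (fun i _ => Real.rpow_nonneg dist_nonneg p) (Finset.mem_univ (0 : Fin 2))
      simpa [τ] using h0
    have h2 : dist (inc (X k) 0 t) (inc (X l) 0 t) ≤ ε := by
      have hd : dist (inc (X k) 0 t) (inc (X l) 0 t)
          = (dist (inc (X k) 0 t) (inc (X l) 0 t) ^ p) ^ (1/p) := by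
        rw [one_div, Real.rpow_rpow_inv dist_nonneg hpne]
      rw [hd]
      exact le_trans (Real.rpow_le_rpow (Real.rpow_nonneg dist_nonneg p) hterm (by positivity)) h
    have e : ∀ m : ℕ, inc (X m) 0 t = X m t := fun m => by simp [inc, (hX m).2.1]
    rwa [e k, e l] at h2
  -- pointwise limit
  have hcau : ∀ t, t ∈ Set.Icc (0:ℝ) 1 →
      ∃ x : G, Filter.Tendsto (fun k => X k t) Filter.atTop (nhds x) := by
    intro t ht
    apply cauchySeq_tendsto_of_complete
    rw [Metric.cauchySeq_iff]
    intro ε hε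
    obtain ⟨N, hN⟩ := hUC (ε/2) (by positivity)
    exact ⟨N, fun m hm n hn => lt_of_le_of_lt (hN m n hm hn t ht) (by linarith)⟩
  choose! Y hY using hcau
  have hYdist : ∀ (ε:ℝ), 0 < ε → ∃ N, ∀ k, N ≤ k →
      ∀ t ∈ Set.Icc (0:ℝ) 1, dist (X k t) (Y t) ≤ ε := by
    intro ε hε
    obtain ⟨N, hN⟩ := hUC ε hε
    refine ⟨N, fun k hk t ht => ?_⟩
    have htend : Filter.Tendsto (fun l => dist (X k t) (X l t)) Filter.atTop
        (nhds (dist (X k t) (Y t))) := tendsto_const_nhds.dist (hY t ht)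
    exact le_of_tendsto htend (Filter.eventually_atTop.2 ⟨N, fun l hl => hN k l hk hl t ht⟩)
  -- continuity
  have hco : ContinuousOn Y (Set.Icc (0:ℝ) 1) := by
    have htu : TendstoUniformlyOn (fun k t => X k t) Y Filter.atTop (Set.Icc (0:ℝ) 1) := by
      rw [Metric.tendstoUniformlyOn_iff]
      intro ε hε
      obtain ⟨N, hN⟩ := hYdist (ε/2) (by positivity)
      refine Filter.eventually_atTop.2 ⟨N, fun k hk t ht => ?_⟩
      have := hN k hk t ht
      rw [dist_comm]
      linarith
    exact htu.continuousOn (Filter.Eventually.of_forall fun k => (hX k).1).frequently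
  have hY0 : Y 0 = 1 := by
    have hfun : (fun k => X k (0:ℝ)) = fun _ => (1:G) := funext fun k => (hX k).2.1
    have h1 : Filter.Tendsto (fun k => X k (0:ℝ)) Filter.atTop (nhds (1:G)) := by
      rw [hfun]; exact tendsto_const_nhds
    exact tendsto_nhds_unique (hY 0 ⟨le_refl 0, zero_le_one⟩) h1
  -- limit of p-variation sums
  have hlim_sum : ∀ (ε : ℝ), 0 < ε → ∀ N : ℕ,
      (∀ k l, N ≤ k → N ≤ l → ∀ (n : ℕ) (τ : Fin (n + 1) → ℝ), IsPartition τ 0 1 →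
        (∑ i : Fin n, dist (inc (X k) (τ i.castSucc) (τ i.succ))
            (inc (X l) (τ i.castSucc) (τ i.succ)) ^ p) ^ (1 / p) ≤ ε) →
      ∀ k, N ≤ k → ∀ (n : ℕ) (τ : Fin (n + 1) → ℝ), IsPartition τ 0 1 →
        ∑ i : Fin n, dist (inc (X k) (τ i.castSucc) (τ i.succ))
          (inc Y (τ i.castSucc) (τ i.succ)) ^ p ≤ ε ^ p := by
    intro ε hε N hN k hk n τ hτ
    have htend : Filter.Tendsto (fun l => ∑ i : Fin n,
        dist (inc (X k) (τ i.castSucc) (τ i.succ))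
          (inc (X l) (τ i.castSucc) (τ i.succ)) ^ p) Filter.atTop
        (nhds (∑ i : Fin n, dist (inc (X k) (τ i.castSucc) (τ i.succ))
          (inc Y (τ i.castSucc) (τ i.succ)) ^ p)) := by
      apply tendsto_finset_sum
      intro i _
      have h1 : Filter.Tendsto (fun l => inc (X l) (τ i.castSucc) (τ i.succ)) Filter.atTop
          (nhds (inc Y (τ i.castSucc) (τ i.succ))) :=
        ((hY _ (hmem τ hτ _)).inv.mul (hY _ (hmem τ hτ _)))
      exact (tendsto_const_nhds.dist h1).rpow_const (Or.inr hp0.le)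
    refine le_of_tendsto htend (Filter.eventually_atTop.2 ⟨N, fun l hl => ?_⟩)
    have hsnn : (0:ℝ) ≤ ∑ i : Fin n, dist (inc (X k) (τ i.castSucc) (τ i.succ))
        (inc (X l) (τ i.castSucc) (τ i.succ)) ^ p :=
      Finset.sum_nonneg fun i _ => Real.rpow_nonneg dist_nonneg p
    calc (∑ i : Fin n, dist (inc (X k) (τ i.castSucc) (τ i.succ))
          (inc (X l) (τ i.castSucc) (τ i.succ)) ^ p)
        = ((∑ i : Fin n, dist (inc (X k) (τ i.castSucc) (τ i.succ))
          (inc (X l) (τ i.castSucc) (τ i.succ)) ^ p) ^ (1/p)) ^ p := by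
          rw [one_div, Real.rpow_inv_rpow hsnn hpne]
      _ ≤ ε ^ p := Real.rpow_le_rpow (Real.rpow_nonneg hsnn _)
          (hN k l hk hl n τ hτ) hp0.le
  -- p-variation bound for Y
  obtain ⟨N₁, hN₁⟩ := hcauchy 1 one_pos
  obtain ⟨M, hM⟩ := (hX N₁).2.2
  have hbound : ∀ (n : ℕ) (τ : Fin (n+1) → ℝ), IsPartition τ 0 1 →
      ∑ i : Fin n, dist (1:G) (inc Y (τ i.castSucc) (τ i.succ)) ^ p
        ≤ ((M ⊔ 0) ^ (1/p) + 1) ^ p := by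
    intro n τ hτ
    set f := fun i : Fin n => dist (1:G) (inc (X N₁) (τ i.castSucc) (τ i.succ)) with hf
    set g := fun i : Fin n => dist (inc (X N₁) (τ i.castSucc) (τ i.succ))
      (inc Y (τ i.castSucc) (τ i.succ)) with hg
    have hsum1 : ∑ i : Fin n, g i ^ p ≤ 1 := by
      have := hlim_sum 1 one_pos N₁ hN₁ N₁ le_rfl n τ hτ
      simpa using this
    have h1 : ∑ i : Fin n, dist (1:G) (inc Y (τ i.castSucc) (τ i.succ)) ^ p
        ≤ ∑ i : Fin n, (f i + g i) ^ p :=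
      Finset.sum_le_sum fun i _ =>
        Real.rpow_le_rpow dist_nonneg (dist_triangle _ _ _) hp0.le
    have h2 : (∑ i : Fin n, (f i + g i) ^ p) ^ (1/p)
        ≤ (∑ i : Fin n, f i ^ p) ^ (1/p) + (∑ i : Fin n, g i ^ p) ^ (1/p) :=
      Real.Lp_add_le_of_nonneg (s := Finset.univ) (f := f) (g := g) hp (fun i _ => dist_nonneg) (fun i _ => dist_nonneg)
    have hfnn : (0:ℝ) ≤ ∑ i : Fin n, f i ^ p :=
      Finset.sum_nonneg fun i _ => Real.rpow_nonneg dist_nonneg p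
    have hgnn : (0:ℝ) ≤ ∑ i : Fin n, g i ^ p :=
      Finset.sum_nonneg fun i _ => Real.rpow_nonneg dist_nonneg p
    have h3 : (∑ i : Fin n, f i ^ p) ^ (1/p) ≤ (M ⊔ 0) ^ (1/p) :=
      Real.rpow_le_rpow hfnn (le_trans (hM n τ hτ) le_sup_left) (by positivity)
    have h4 : (∑ i : Fin n, g i ^ p) ^ (1/p) ≤ 1 := by
      have := Real.rpow_le_rpow hgnn hsum1 (by positivity : (0:ℝ) ≤ 1/p)
      simpa using this
    have hYnn : (0:ℝ) ≤ ∑ i : Fin n, dist (1:G) (inc Y (τ i.castSucc) (τ i.succ)) ^ p :=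
      Finset.sum_nonneg fun i _ => Real.rpow_nonneg dist_nonneg p
    have haddnn : (0:ℝ) ≤ ∑ i : Fin n, (f i + g i) ^ p := hYnn.trans h1
    have h5 : (∑ i : Fin n, dist (1:G) (inc Y (τ i.castSucc) (τ i.succ)) ^ p) ^ (1/p)
        ≤ (M ⊔ 0) ^ (1/p) + 1 :=
      le_trans (Real.rpow_le_rpow hYnn h1 (by positivity))
        (le_trans h2 (add_le_add h3 h4))
    calc ∑ i : Fin n, dist (1:G) (inc Y (τ i.castSucc) (τ i.succ)) ^ p
        = ((∑ i : Fin n, dist (1:G) (inc Y (τ i.castSucc) (τ i.succ)) ^ p) ^ (1/p)) ^ p := by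
          rw [one_div, Real.rpow_inv_rpow hYnn hpne]
      _ ≤ ((M ⊔ 0) ^ (1/p) + 1) ^ p :=
          Real.rpow_le_rpow (Real.rpow_nonneg hYnn _) h5 hp0.le
  refine ⟨Y, ⟨hco, hY0, ((M ⊔ 0) ^ (1/p) + 1) ^ p, hbound⟩, ?_⟩
  intro ε hε
  obtain ⟨N, hN⟩ := hcauchy ε hε
  refine ⟨N, fun k hk n τ hτ => ?_⟩
  have hle := hlim_sum ε hε N hN k hk n τ hτ
  have hsnn : (0:ℝ) ≤ ∑ i : Fin n, dist (inc (X k) (τ i.castSucc) (τ i.succ))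
      (inc Y (τ i.castSucc) (τ i.succ)) ^ p :=
    Finset.sum_nonneg fun i _ => Real.rpow_nonneg dist_nonneg p
  calc (∑ i : Fin n, dist (inc (X k) (τ i.castSucc) (τ i.succ))
        (inc Y (τ i.castSucc) (τ i.succ)) ^ p) ^ (1/p)
      ≤ (ε ^ p) ^ (1/p) := Real.rpow_le_rpow hsnn hle (by positivity)
    _ = ε := by rw [one_div, Real.rpow_rpow_inv hε.le hpne]
end
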